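/- Let f₁ be a hyperbolic analytic circle diffeomorphism with rot f₁ = 0, and let f₂ ≠ id be an analytic circle diffeomorphism. Then for every ρ ∈ [0, 1/2] there exists an analytic circle diffeomorphism h such that rot((h∘f₁∘h⁻¹) ∘ f₂⁻¹) = ρ (mod 1). -/

import Mathlib

open Filter Topology

/-- An analytic circle diffeomorphism, given by an analytic, strictly increasing lift
`F : ℝ → ℝ` with `F (x+1) = F x + 1`, together with an analytic inverse. -/
structure AnalyticCircleDiffeo where
  toFun : ℝ → ℝ
  invFun : ℝ → ℝ
  analyticAt_toFun : ∀ x, AnalyticAt ℝ toFun x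
  analyticAt_invFun : ∀ x, AnalyticAt ℝ invFun x
  strictMono_toFun : StrictMono toFun
  leftInverse : Function.LeftInverse invFun toFun
  rightInverse : Function.RightInverse invFun toFun
  map_add_one : ∀ x, toFun (x + 1) = toFun x + 1

namespace AnalyticCircleDiffeo

/-- The rotation number of (the chosen lift of) a circle diffeomorphism. -/
noncomputable def rot (f : AnalyticCircleDiffeo) : ℝ :=
  limUnder atTop fun n : ℕ => f.toFun^[n] 0 / n

/-- The composition of two analytic circle diffeomorphisms. -/
def comp (f g : AnalyticCircleDiffeo) : AnalyticCircleDiffeo where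
  toFun := f.toFun ∘ g.toFun
  invFun := g.invFun ∘ f.invFun
  analyticAt_toFun := fun x => (f.analyticAt_toFun _).comp (g.analyticAt_toFun x)
  analyticAt_invFun := fun x => (g.analyticAt_invFun _).comp (f.analyticAt_invFun x)
  strictMono_toFun := f.strictMono_toFun.comp g.strictMono_toFun
  leftInverse := fun x => by
    show g.invFun (f.invFun (f.toFun (g.toFun x))) = x
    rw [f.leftInverse (g.toFun x), g.leftInverse x]
  rightInverse := fun x => by
    show f.toFun (g.toFun (g.invFun (f.invFun x))) = x
    rw [g.rightInverse (f.invFun x), f.rightInverse x]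
  map_add_one := fun x => by
    show f.toFun (g.toFun (x + 1)) = f.toFun (g.toFun x) + 1
    rw [g.map_add_one, f.map_add_one]

/-- The inverse of an analytic circle diffeomorphism. -/
def symm (f : AnalyticCircleDiffeo) : AnalyticCircleDiffeo where
  toFun := f.invFun
  invFun := f.toFun
  analyticAt_toFun := f.analyticAt_invFun
  analyticAt_invFun := f.analyticAt_toFun
  strictMono_toFun := fun x y hxy => by
    have h := f.strictMono_toFun.lt_iff_lt (a := f.invFun x) (b := f.invFun y)
    rw [f.rightInverse x, f.rightInverse y] at h
    exact h.mp hxy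
  leftInverse := f.rightInverse
  rightInverse := f.leftInverse
  map_add_one := fun x => by
    apply f.strictMono_toFun.injective
    rw [f.rightInverse, f.map_add_one, f.rightInverse]

/-- The circle diffeomorphism `f + ω : x ↦ f x + ω`. -/
noncomputable def addConst (f : AnalyticCircleDiffeo) (ω : ℝ) : AnalyticCircleDiffeo where
  toFun := fun x => f.toFun x + ω
  invFun := fun x => f.invFun (x - ω)
  analyticAt_toFun := fun x => (f.analyticAt_toFun x).add analyticAt_const
  analyticAt_invFun := fun x => by
    have h1 : AnalyticAt ℝ (fun y : ℝ => y - ω) x := analyticAt_id.sub analyticAt_const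
    have h2 : AnalyticAt ℝ (f.invFun ∘ fun y : ℝ => y - ω) x :=
      AnalyticAt.comp (g := f.invFun) (f := fun y : ℝ => y - ω)
        (f.analyticAt_invFun (x - ω)) h1
    exact h2
  strictMono_toFun := fun x y hxy => add_lt_add_of_lt_of_le (f.strictMono_toFun hxy) (le_refl ω)
  leftInverse := fun x => by
    show f.invFun (f.toFun x + ω - ω) = x
    rw [add_sub_cancel_right, f.leftInverse x]
  rightInverse := fun x => by
    show f.toFun (f.invFun (x - ω)) + ω = x
    rw [f.rightInverse (x - ω)]; ring
  map_add_one := fun x => by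
    show f.toFun (x + 1) + ω = f.toFun x + ω + 1
    rw [f.map_add_one]; ring

/-- Two circle diffeomorphisms are analytically conjugate: `f₂ = h ∘ f₁ ∘ h⁻¹` as maps
of `ℝ/ℤ`; in terms of lifts, `h ∘ f₁ = f₂ ∘ h + k` for some integer `k`. -/
def Conjugate (f₁ f₂ : AnalyticCircleDiffeo) : Prop :=
  ∃ h : AnalyticCircleDiffeo, ∃ k : ℤ,
    ∀ x, h.toFun (f₁.toFun x) = f₂.toFun (h.toFun x) + k

/-- `f` is the identity of `ℝ/ℤ`, i.e. its lift is an integer translation. -/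
def IsId (f : AnalyticCircleDiffeo) : Prop :=
  ∃ k : ℤ, ∀ x, f.toFun x = x + k

/-- A circle diffeomorphism (with rotation number `0 mod 1`) is hyperbolic if it has a
fixed point on `ℝ/ℤ` and the multiplier at every fixed point is `≠ 1`. -/
def Hyperbolic (f : AnalyticCircleDiffeo) : Prop :=
  (∃ x : ℝ, ∃ k : ℤ, f.toFun x = x + k) ∧
    ∀ x : ℝ, (∃ k : ℤ, f.toFun x = x + k) → deriv f.toFun x ≠ 1

end AnalyticCircleDiffeo

/-- A real number is Diophantine. -/
def Diophantine (ρ : ℝ) : Prop :=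
  ∃ C > (0:ℝ), ∃ β > (0:ℝ), ∀ p : ℤ, ∀ q : ℕ, 0 < q →
    |ρ - p / q| ≥ C / (q : ℝ) ^ ((2:ℝ) + β)


namespace AnalyticCircleDiffeo

lemma analyticAt_rsin (x : ℝ) : AnalyticAt ℝ Real.sin x := by
  have h2 : AnalyticAt ℝ Complex.sin (x : ℂ) :=
    (Complex.differentiable_sin.analyticAt _).restrictScalars
  have h4 : AnalyticAt ℝ (fun t : ℝ => Complex.sin t) x :=
    h2.comp (Complex.ofRealCLM.analyticAt x)
  have h5 : AnalyticAt ℝ (fun t : ℝ => (Complex.sin t).re) x :=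
    (Complex.reCLM.analyticAt _).comp h4
  have he : (fun t : ℝ => (Complex.sin (t:ℂ)).re) = Real.sin :=
    funext fun t => Complex.sin_ofReal_re t
  rwa [he] at h5

lemma addone_nat {G : ℝ → ℝ} (h : ∀ x, G (x+1) = G x + 1) (n : ℕ) (x : ℝ) :
    G (x + n) = G x + n := by
  induction n with
  | zero => simp
  | succ m ih =>
    have he : x + ((m:ℝ) + 1) = (x + m) + 1 := by ring
    push_cast
    rw [he, h, ih]; ring

lemma addone_int {G : ℝ → ℝ} (h : ∀ x, G (x+1) = G x + 1) (j : ℤ) (x : ℝ) :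
    G (x + j) = G x + j := by
  obtain ⟨n, rfl | rfl⟩ := Int.eq_nat_or_neg j
  · push_cast; exact addone_nat h n x
  · push_cast
    have h2 := addone_nat h n (x - n)
    rw [sub_add_cancel] at h2
    rw [show x + -(n:ℝ) = x - n by ring, h2]
    ring

section mkP
variable {F : ℝ → ℝ} (ha : ∀ x, AnalyticAt ℝ F x) (hd : ∀ x, 0 < deriv F x)
  (h1 : ∀ x, F (x + 1) = F x + 1)

include ha h1 in
lemma mk'_surj : Function.Surjective F := by
  intro y
  have hc : Continuous F := continuous_iff_continuousAt.2 fun x => (ha x).continuousAt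
  obtain ⟨n, hn⟩ := exists_nat_ge (|y - F 0|)
  have hlow : F (-(n:ℝ)) ≤ y := by
    have h2 := addone_int h1 (-(n:ℤ)) 0
    simp only [zero_add] at h2
    push_cast at h2
    rw [h2]
    linarith [(abs_le.1 hn).1]
  have hhigh : y ≤ F (n:ℝ) := by
    have h2 := addone_int h1 (n:ℤ) 0
    simp only [zero_add] at h2; push_cast at h2; rw [h2]
    linarith [(abs_le.1 hn).2]
  obtain ⟨x, _, hx⟩ := intermediate_value_Icc
    (by linarith [n.cast_nonneg (α := ℝ)] : -(n:ℝ) ≤ n) hc.continuousOn ⟨hlow, hhigh⟩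
  exact ⟨x, hx⟩

include ha hd h1 in
lemma mk'_inv_analytic : ∀ y, AnalyticAt ℝ
    (⇑(StrictMono.orderIsoOfSurjective F (strictMono_of_deriv_pos hd) (mk'_surj ha h1)).symm) y := by
  intro y
  set e := StrictMono.orderIsoOfSurjective F (strictMono_of_deriv_pos hd) (mk'_surj ha h1) with he
  set a : ℝ := e.symm y with haa
  have hFa : F a = y := e.apply_symm_apply y
  obtain ⟨p, hp⟩ := ha a
  set d := deriv F a with hdd
  have hdne : d ≠ 0 := ne_of_gt (hd a)
  set i : ℝ ≃L[ℝ] ℝ := ContinuousLinearEquiv.unitsEquivAut ℝ (Units.mk0 d hdne) with hi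
  have hicoe : (i : ℝ →L[ℝ] ℝ) = ContinuousLinearMap.smulRight (1 : ℝ →L[ℝ] ℝ) d := by
    ext x
    simp [hi, ContinuousLinearEquiv.unitsEquivAut_apply, mul_comm]
  have hp1 : p 1 = (continuousMultilinearCurryFin1 ℝ ℝ ℝ).symm (i : ℝ →L[ℝ] ℝ) := by
    have hA : HasFDerivAt F (continuousMultilinearCurryFin1 ℝ ℝ ℝ (p 1)) a := hp.hasFDerivAt
    have hB : HasFDerivAt F (ContinuousLinearMap.smulRight (1 : ℝ →L[ℝ] ℝ) d) a :=
      ((ha a).differentiableAt.hasDerivAt).hasFDerivAt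
    have hu := hA.unique hB
    rw [hicoe, ← hu]
    exact ((continuousMultilinearCurryFin1 ℝ ℝ ℝ).symm_apply_apply (p 1)).symm
  set ph : OpenPartialHomeomorph ℝ ℝ := e.toHomeomorph.toOpenPartialHomeomorph with hph
  have h0 : a ∈ ph.source := by simp [hph]
  have hps : HasFPowerSeriesAt (⇑ph) p a := hp
  have hmain := ph.hasFPowerSeriesAt_symm h0 hps hp1
  have hres : AnalyticAt ℝ (⇑e.symm) (ph a) := ⟨_, hmain⟩
  have hpha : ph a = y := by rw [show (ph a : ℝ) = F a from rfl, hFa]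
  rwa [hpha] at hres

/-- Build an analytic circle diffeo from a lift with positive derivative. -/
noncomputable def mk' : AnalyticCircleDiffeo where
  toFun := F
  invFun := ⇑(StrictMono.orderIsoOfSurjective F (strictMono_of_deriv_pos hd) (mk'_surj ha h1)).symm
  analyticAt_toFun := ha
  analyticAt_invFun := mk'_inv_analytic ha hd h1
  strictMono_toFun := strictMono_of_deriv_pos hd
  leftInverse := fun x =>
    (StrictMono.orderIsoOfSurjective F (strictMono_of_deriv_pos hd) (mk'_surj ha h1)).symm_apply_apply x
  rightInverse := fun x =>
    (StrictMono.orderIsoOfSurjective F (strictMono_of_deriv_pos hd) (mk'_surj ha h1)).apply_symm_apply x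
  map_add_one := h1

@[simp] lemma mk'_toFun (x : ℝ) : (mk' ha hd h1).toFun x = F x := rfl

end mkP


variable (f : AnalyticCircleDiffeo)

lemma cont : Continuous f.toFun :=
  continuous_iff_continuousAt.2 fun x => (f.analyticAt_toFun x).continuousAt

lemma contInv : Continuous f.invFun :=
  continuous_iff_continuousAt.2 fun x => (f.analyticAt_invFun x).continuousAt

lemma hasDeriv (x : ℝ) : HasDerivAt f.toFun (deriv f.toFun x) x :=
  (f.analyticAt_toFun x).differentiableAt.hasDerivAt

lemma deriv_nonneg (x : ℝ) : 0 ≤ deriv f.toFun x := by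
  have hs := hasDerivAt_iff_tendsto_slope.1 (f.hasDeriv x)
  have hev : ∀ᶠ y in 𝓝[≠] x, 0 ≤ slope f.toFun x y := by
    refine Filter.Eventually.of_forall fun y => ?_
    rw [slope_def_field]
    rcases lt_trichotomy x y with h | h | h
    · apply div_nonneg
      · have := (f.strictMono_toFun h).le; linarith
      · linarith
    · subst h; simp
    · rw [div_nonneg_iff]
      right
      constructor
      · have := (f.strictMono_toFun h).le; linarith
      · linarith
  exact ge_of_tendsto hs hev

lemma deriv_mul_inv (x : ℝ) :
    deriv f.invFun (f.toFun x) * deriv f.toFun x = 1 := by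
  have h1 : HasDerivAt f.invFun (deriv f.invFun (f.toFun x)) (f.toFun x) :=
    (f.analyticAt_invFun (f.toFun x)).differentiableAt.hasDerivAt
  have h3 := h1.comp x (f.hasDeriv x)
  have h4 : f.invFun ∘ f.toFun = id := funext f.leftInverse
  rw [h4] at h3
  exact h3.unique (hasDerivAt_id x)

lemma deriv_pos (x : ℝ) : 0 < deriv f.toFun x := by
  rcases (f.deriv_nonneg x).lt_or_eq with h | h
  · exact h
  · exfalso
    have := f.deriv_mul_inv x
    rw [← h, mul_zero] at this
    norm_num at this

/-- The identity circle diffeomorphism. -/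
protected def one : AnalyticCircleDiffeo where
  toFun := id
  invFun := id
  analyticAt_toFun := fun _ => analyticAt_id
  analyticAt_invFun := fun _ => analyticAt_id
  strictMono_toFun := strictMono_id
  leftInverse := fun _ => rfl
  rightInverse := fun _ => rfl
  map_add_one := fun _ => rfl

/-- Translation by `c`. -/
noncomputable def translation (c : ℝ) : AnalyticCircleDiffeo :=
  AnalyticCircleDiffeo.one.addConst c

@[simp] lemma translation_toFun (c x : ℝ) : (translation c).toFun x = x + c := rfl

end AnalyticCircleDiffeo
namespace AnalyticCircleDiffeo

open Real Filter Topology Set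

noncomputable def bumpF : ℝ → ℝ := fun x => x - (4*π)⁻¹ * Real.sin (2*π*x)

lemma bumpF_analytic (x : ℝ) : AnalyticAt ℝ bumpF x := by
  unfold bumpF
  exact analyticAt_id.sub (analyticAt_const.mul
    ((analyticAt_rsin _).comp (analyticAt_const.mul analyticAt_id)))

lemma bumpF_hasDeriv (x : ℝ) :
    HasDerivAt bumpF (1 - (4*π)⁻¹ * (Real.cos (2*π*x) * (2*π*1))) x := by
  unfold bumpF
  have h1 : HasDerivAt (fun y : ℝ => 2*π*y) (2*π*1) x := (hasDerivAt_id x).const_mul (2*π)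
  have h2 := (Real.hasDerivAt_sin (2*π*x)).comp x h1
  exact (hasDerivAt_id x).sub (h2.const_mul ((4*π)⁻¹))

lemma bumpF_deriv_pos (x : ℝ) : 0 < deriv bumpF x := by
  rw [(bumpF_hasDeriv x).deriv]
  have hπ := Real.pi_pos
  have hc := Real.cos_le_one (2*π*x)
  have h4 : (4*π)⁻¹ * (Real.cos (2*π*x) * (2*π*1)) = Real.cos (2*π*x) / 2 := by
    field_simp; ring
  rw [h4]
  linarith

lemma bumpF_add_one (x : ℝ) : bumpF (x + 1) = bumpF x + 1 := by
  unfold bumpF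
  rw [show 2*π*(x+1) = 2*π*x + 2*π by ring, Real.sin_add_two_pi]
  ring

/-- The basic "bump" analytic circle diffeomorphism, attracting to integers. -/
noncomputable def bump : AnalyticCircleDiffeo :=
  mk' bumpF_analytic bumpF_deriv_pos bumpF_add_one

lemma bump_toFun (x : ℝ) : bump.toFun x = x - (4*π)⁻¹ * Real.sin (2*π*x) := rfl

lemma bump_zero : bump.toFun 0 = 0 := by
  rw [bump_toFun]; simp

lemma bump_lt_self {x : ℝ} (hx : x ∈ Ioo (0:ℝ) (1/2)) : bump.toFun x < x := by
  rw [bump_toFun]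
  have hπ := Real.pi_pos
  have hs : 0 < Real.sin (2*π*x) := by
    apply Real.sin_pos_of_pos_of_lt_pi
    · nlinarith [hx.1]
    · nlinarith [hx.2]
  have : 0 < (4*π)⁻¹ * Real.sin (2*π*x) := by positivity
  linarith

lemma bump_neg (x : ℝ) : bump.toFun (-x) = -(bump.toFun x) := by
  rw [bump_toFun, bump_toFun, show 2*π*(-x) = -(2*π*x) by ring, Real.sin_neg]
  ring

lemma bump_iter_neg (n : ℕ) (x : ℝ) : bump.toFun^[n] (-x) = -(bump.toFun^[n] x) := by
  induction n with
  | zero => simp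
  | succ m ih =>
    rw [Function.iterate_succ_apply', Function.iterate_succ_apply', ih, bump_neg]

lemma bump_one_sub (x : ℝ) : bump.toFun (1 - x) = 1 - bump.toFun x := by
  have h := bump.map_add_one (-x)
  rw [show -x + 1 = 1 - x by ring] at h
  rw [h, bump_neg]; ring

lemma bump_iter_one_sub (n : ℕ) (x : ℝ) :
    bump.toFun^[n] (1 - x) = 1 - bump.toFun^[n] x := by
  induction n with
  | zero => simp
  | succ m ih =>
    rw [Function.iterate_succ_apply', Function.iterate_succ_apply', ih, bump_one_sub]

lemma tendsto_bump_lo {a : ℝ} (ha : a ∈ Ioo (0:ℝ) (1/2)) :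
    Tendsto (fun n => bump.toFun^[n] a) atTop (𝓝 0) := by
  set s := fun n => bump.toFun^[n] a with hs
  have hinv : ∀ n, s n ∈ Ioo (0:ℝ) (1/2) := by
    intro n
    induction n with
    | zero => exact ha
    | succ m ih =>
      have hstep : s (m+1) = bump.toFun (s m) := Function.iterate_succ_apply' _ _ _
      constructor
      · rw [hstep, ← bump_zero]
        exact bump.strictMono_toFun ih.1
      · rw [hstep]
        exact lt_trans (bump_lt_self ih) ih.2
  have hanti : Antitone s := by
    apply antitone_nat_of_succ_le
    intro n
    have hstep : s (n+1) = bump.toFun (s n) := Function.iterate_succ_apply' _ _ _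
    rw [hstep]
    exact (bump_lt_self (hinv n)).le
  have hbdd : BddBelow (Set.range s) := ⟨0, by rintro y ⟨n, rfl⟩; exact (hinv n).1.le⟩
  have hL : Tendsto s atTop (𝓝 (⨅ n, s n)) := tendsto_atTop_ciInf hanti hbdd
  set L := ⨅ n, s n with hLdef
  have hL0 : 0 ≤ L := le_ciInf fun n => (hinv n).1.le
  have hLlt : L < 1/2 := lt_of_le_of_lt (ciInf_le hbdd 0) (hinv 0).2
  have hfix : bump.toFun L = L := by
    have h1 : Tendsto (fun n => bump.toFun (s n)) atTop (𝓝 (bump.toFun L)) :=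
      (bump.cont.tendsto L).comp hL
    have h2 : (fun n => bump.toFun (s n)) = fun n => s (n+1) :=
      funext fun n => (Function.iterate_succ_apply' _ _ _).symm
    rw [h2] at h1
    have h3 : Tendsto (fun n => s (n+1)) atTop (𝓝 L) := hL.comp (tendsto_add_atTop_nat 1)
    exact tendsto_nhds_unique h1 h3
  have hL0' : L = 0 := by
    by_contra hne
    have hpos : 0 < L := lt_of_le_of_ne hL0 (Ne.symm hne)
    exact absurd hfix (ne_of_lt (bump_lt_self ⟨hpos, hLlt⟩))
  rwa [hL0'] at hL

lemma tendsto_bump_neg {a : ℝ} (ha : a ∈ Ioo (-(1/2) : ℝ) 0) :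
    Tendsto (fun n => bump.toFun^[n] a) atTop (𝓝 0) := by
  have h1 : -a ∈ Ioo (0:ℝ) (1/2) := ⟨by linarith [ha.2], by linarith [ha.1]⟩
  have h2 := (tendsto_bump_lo h1).neg
  rw [neg_zero] at h2
  have h3 : (fun n => -(bump.toFun^[n] (-a))) = fun n => bump.toFun^[n] a := by
    funext n; rw [← bump_iter_neg, neg_neg]
  rwa [h3] at h2

lemma tendsto_bump_hi {a : ℝ} (ha : a ∈ Ioo (1/2 : ℝ) 1) :
    Tendsto (fun n => bump.toFun^[n] a) atTop (𝓝 1) := by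
  have h1 : 1 - a ∈ Ioo (0:ℝ) (1/2) := ⟨by linarith [ha.2], by linarith [ha.1]⟩
  have h2 := (tendsto_bump_lo h1).const_sub (1:ℝ)
  rw [sub_zero] at h2
  have h3 : (fun n => 1 - bump.toFun^[n] (1-a)) = fun n => bump.toFun^[n] a := by
    funext n; rw [← bump_iter_one_sub, sub_sub_cancel]
  rwa [h3] at h2

/-- `n`-fold composition power of an analytic circle diffeo. -/
noncomputable def iterD (f : AnalyticCircleDiffeo) : ℕ → AnalyticCircleDiffeo
  | 0 => AnalyticCircleDiffeo.one
  | (n+1) => (iterD f n).comp f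

lemma iterD_toFun (f : AnalyticCircleDiffeo) (n : ℕ) :
    (iterD f n).toFun = f.toFun^[n] := by
  induction n with
  | zero => rfl
  | succ m ih =>
    show (iterD f m).toFun ∘ f.toFun = _
    rw [ih, Function.iterate_succ]

lemma gap_exists {β₀ γ : ℝ} (hβ : β₀ ∈ Ioo (0:ℝ) 1) (hγ : γ ∈ Ioo (0:ℝ) 1) :
    ∃ (n : ℕ) (e : ℝ), bump.toFun^[n] (e + β₀) - bump.toFun^[n] e = γ := by
  have hβ2 : β₀/2 ∈ Ioo (0:ℝ) (1/2) := ⟨by linarith [hβ.1], by linarith [hβ.2]⟩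
  have hβ2' : -(β₀/2) ∈ Ioo (-(1/2):ℝ) 0 := ⟨by linarith [hβ.2], by linarith [hβ.1]⟩
  have hc1 : (1-β₀)/2 ∈ Ioo (0:ℝ) (1/2) := ⟨by linarith [hβ.2], by linarith [hβ.1]⟩
  have hc2 : (1+β₀)/2 ∈ Ioo (1/2:ℝ) 1 := ⟨by linarith [hβ.1], by linarith [hβ.2]⟩
  have t1 : Tendsto (fun n => bump.toFun^[n] (-(β₀/2) + β₀) - bump.toFun^[n] (-(β₀/2)))
      atTop (𝓝 0) := by
    have := (tendsto_bump_lo hβ2).sub (tendsto_bump_neg hβ2')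
    rw [sub_zero] at this
    have he : -(β₀/2) + β₀ = β₀/2 := by ring
    rwa [he]
  have t2 : Tendsto (fun n => bump.toFun^[n] ((1-β₀)/2 + β₀) - bump.toFun^[n] ((1-β₀)/2))
      atTop (𝓝 1) := by
    have := (tendsto_bump_hi hc2).sub (tendsto_bump_lo hc1)
    rw [sub_zero] at this
    have he : (1-β₀)/2 + β₀ = (1+β₀)/2 := by ring
    rwa [he]
  have ev1 : ∀ᶠ n in atTop, bump.toFun^[n] (-(β₀/2) + β₀) - bump.toFun^[n] (-(β₀/2)) < γ :=
    t1.eventually_lt_const hγ.1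
  have ev2 : ∀ᶠ n in atTop, γ < bump.toFun^[n] ((1-β₀)/2 + β₀) - bump.toFun^[n] ((1-β₀)/2) :=
    t2.eventually_const_lt hγ.2
  obtain ⟨n, h1, h2⟩ := (ev1.and ev2).exists
  set g : ℝ → ℝ := fun e => bump.toFun^[n] (e + β₀) - bump.toFun^[n] e with hg
  have hgc : Continuous g :=
    ((bump.cont.iterate n).comp (continuous_id.add continuous_const)).sub (bump.cont.iterate n)
  have hmem : γ ∈ Set.uIcc (g (-(β₀/2))) (g ((1-β₀)/2)) :=
    Set.mem_uIcc.2 (Or.inl ⟨h1.le, h2.le⟩)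
  obtain ⟨e, _, he⟩ := intermediate_value_uIcc hgc.continuousOn hmem
  exact ⟨n, e, he⟩

lemma exists_two_point (v w : ℝ) {β₀ γ : ℝ} (hβ : β₀ ∈ Ioo (0:ℝ) 1) (hγ : γ ∈ Ioo (0:ℝ) 1) :
    ∃ H : AnalyticCircleDiffeo, H.toFun v = w ∧ H.toFun (v + β₀) = w + γ := by
  obtain ⟨n, e, hne⟩ := gap_exists hβ hγ
  set P : AnalyticCircleDiffeo := (iterD bump n).comp (translation (e - v)) with hP
  have hPval : ∀ x, P.toFun x = bump.toFun^[n] (x + (e - v)) := by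
    intro x
    show (iterD bump n).toFun ((translation (e-v)).toFun x) = _
    rw [iterD_toFun, translation_toFun]
  set H : AnalyticCircleDiffeo := (translation (w - P.toFun v)).comp P with hH
  have hHval : ∀ x, H.toFun x = P.toFun x + (w - P.toFun v) := fun x => rfl
  refine ⟨H, ?_, ?_⟩
  · rw [hHval]; ring
  · rw [hHval, hPval, hPval, show v + β₀ + (e - v) = e + β₀ by ring,
      show v + (e - v) = e by ring]
    linarith [hne]
end AnalyticCircleDiffeo
namespace AnalyticCircleDiffeo

open Filter Topology Set

/-- The `CircleDeg1Lift` underlying an analytic circle diffeomorphism. -/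
noncomputable def liftOf (f : AnalyticCircleDiffeo) : CircleDeg1Lift :=
  ⟨⟨f.toFun, f.strictMono_toFun.monotone⟩, f.map_add_one⟩

lemma liftOf_coe (f : AnalyticCircleDiffeo) : ⇑(liftOf f) = f.toFun := rfl

lemma rot_eq_tau (g : AnalyticCircleDiffeo) : rot g = (liftOf g).translationNumber := by
  have ht := (liftOf g).tendsto_translation_number₀
  have he : (fun n : ℕ => ((liftOf g)^n) 0 / n) = fun n : ℕ => g.toFun^[n] 0 / n := by
    funext n
    rw [CircleDeg1Lift.coe_pow]
    rfl
  rw [he] at ht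
  exact ht.limUnder_eq

/-- The lift of `(H ∘ f₁ ∘ H⁻¹) ∘ f₂⁻¹`. -/
noncomputable def lift2 (f₁ f₂ H : AnalyticCircleDiffeo) : CircleDeg1Lift :=
  ⟨⟨fun x => H.toFun (f₁.toFun (H.invFun (f₂.invFun x))),
    fun _ _ hab =>
      H.strictMono_toFun.monotone (f₁.strictMono_toFun.monotone
        (H.symm.strictMono_toFun.monotone (f₂.symm.strictMono_toFun.monotone hab)))⟩,
    fun x => by
      have h2 : f₂.invFun (x+1) = f₂.invFun x + 1 := f₂.symm.map_add_one x
      have hH : ∀ y : ℝ, H.invFun (y+1) = H.invFun y + 1 := fun y => H.symm.map_add_one y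
      show H.toFun (f₁.toFun (H.invFun (f₂.invFun (x+1)))) =
        H.toFun (f₁.toFun (H.invFun (f₂.invFun x))) + 1
      rw [h2, hH, f₁.map_add_one, H.map_add_one]⟩

lemma lift2_coe (f₁ f₂ H : AnalyticCircleDiffeo) :
    ⇑(lift2 f₁ f₂ H) = fun x => H.toFun (f₁.toFun (H.invFun (f₂.invFun x))) := rfl

lemma invFun_eq (f : AnalyticCircleDiffeo) {x y : ℝ} (h : f.toFun x = y) : f.invFun y = x := by
  rw [← h]; exact f.leftInverse x

lemma invFun_congr (f g : AnalyticCircleDiffeo) (h : f.toFun = g.toFun) :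
    f.invFun = g.invFun := by
  funext y
  apply invFun_eq
  rw [h]
  exact g.rightInverse y

lemma lift2_congr (f₁ f₂ H H' : AnalyticCircleDiffeo) (h : H.toFun = H'.toFun) :
    lift2 f₁ f₂ H = lift2 f₁ f₂ H' := by
  ext x
  show H.toFun (f₁.toFun (H.invFun (f₂.invFun x))) =
    H'.toFun (f₁.toFun (H'.invFun (f₂.invFun x)))
  rw [h, invFun_congr H H' h]

lemma tau_int (f₁ f₂ H : AnalyticCircleDiffeo) {v w c β₀ : ℝ} {j : ℤ}
    (hF1 : f₁.toFun v = v + β₀ + j) (hF2 : f₂.toFun w = w + c)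
    (hHv : H.toFun v = w) (hHb : H.toFun (v + β₀) = w + Int.fract c) :
    (lift2 f₁ f₂ H).translationNumber = ((j - ⌊c⌋ : ℤ) : ℝ) := by
  rw [CircleDeg1Lift.translationNumber_of_eq_add_int (lift2 f₁ f₂ H) (x := f₂.toFun w)
    (m := j - ⌊c⌋) ?_]
  show H.toFun (f₁.toFun (H.invFun (f₂.invFun (f₂.toFun w)))) = f₂.toFun w + ((j - ⌊c⌋ : ℤ):ℝ)
  rw [f₂.leftInverse w]
  have h1 : H.invFun w = v := invFun_eq H hHv
  rw [h1, hF1]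
  have h3 := addone_int H.map_add_one j (v + β₀)
  rw [show v + β₀ + (j:ℝ) = v + β₀ + (j:ℝ) from rfl] at h3
  rw [h3, hHb, hF2]
  have h4 : Int.fract c = c - ⌊c⌋ := rfl
  rw [h4]
  push_cast
  ring

lemma exists_nonint (f₂ : AnalyticCircleDiffeo) (h₂ : ¬ IsId f₂) :
    ∃ w : ℝ, ∀ m : ℤ, f₂.toFun w - w ≠ m := by
  by_contra hcon
  push_neg at hcon
  set q : ℝ → ℝ := fun w => f₂.toFun w - w with hq
  have hqc : Continuous q := f₂.cont.sub continuous_id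
  have hcon' : ∀ w, ∃ m : ℤ, q w = (m:ℝ) := fun w => hcon w
  obtain ⟨m0, hm0⟩ := hcon' 0
  have hconst : ∀ w, q w = q 0 := by
    intro w
    by_contra hne
    obtain ⟨mw, hmw⟩ := hcon' w
    rcases lt_or_gt_of_ne hne with h | h
    · have hlt : (mw:ℝ) < m0 := by rw [← hmw, ← hm0]; exact h
      have hle : mw + 1 ≤ m0 := by exact_mod_cast Int.lt_iff_add_one_le.1 (by exact_mod_cast hlt)
      have hmem : (m0:ℝ) - 1/2 ∈ uIcc (q w) (q 0) := by
        apply Set.mem_uIcc.2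
        left
        constructor
        · rw [hmw]
          have hle' : (mw:ℝ) + 1 ≤ (m0:ℝ) := by exact_mod_cast hle
          linarith
        · rw [hm0]; linarith
      obtain ⟨z, _, hz⟩ := intermediate_value_uIcc hqc.continuousOn hmem
      obtain ⟨mz, hmz⟩ := hcon' z
      rw [hmz] at hz
      have h2 : ((2*mz : ℤ):ℝ) = ((2*m0 - 1 : ℤ):ℝ) := by push_cast; linarith
      have := Int.cast_injective h2
      omega
    · have hlt : (m0:ℝ) < mw := by rw [← hmw, ← hm0]; exact h
      have hle : m0 + 1 ≤ mw := by exact_mod_cast Int.lt_iff_add_one_le.1 (by exact_mod_cast hlt)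
      have hmem : (m0:ℝ) + 1/2 ∈ uIcc (q w) (q 0) := by
        apply Set.mem_uIcc.2
        right
        constructor
        · rw [hm0]; linarith
        · rw [hmw]
          have hle' : (m0:ℝ) + 1 ≤ (mw:ℝ) := by exact_mod_cast hle
          linarith
      obtain ⟨z, _, hz⟩ := intermediate_value_uIcc hqc.continuousOn hmem
      obtain ⟨mz, hmz⟩ := hcon' z
      rw [hmz] at hz
      have h2 : ((2*mz : ℤ):ℝ) = ((2*m0 + 1 : ℤ):ℝ) := by push_cast; linarith
      have := Int.cast_injective h2
      omega
  refine h₂ ⟨m0, fun x => ?_⟩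
  have hx := hconst x
  rw [hm0] at hx
  have hx2 : f₂.toFun x - x = (m0:ℝ) := hx
  linarith

lemma exists_updown (f₁ : AnalyticCircleDiffeo) (hyp : Hyperbolic f₁) :
    ∃ (j : ℤ) (v₁ v₂ β₁ β₂ : ℝ), β₁ ∈ Ioo (0:ℝ) 1 ∧ β₂ ∈ Ioo (0:ℝ) 1 ∧
      f₁.toFun v₁ = v₁ + β₁ + j ∧ f₁.toFun v₂ = v₂ + β₂ + ((j-1 : ℤ):ℝ) := by
  obtain ⟨⟨a, k, hak⟩, hder⟩ := hyp
  have hdne : deriv f₁.toFun a ≠ 1 := hder a ⟨k, hak⟩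
  set g : ℝ → ℝ := fun x => f₁.toFun x - x - k with hg
  have hga : g a = 0 := by simp only [hg, hak]; ring
  set d : ℝ := deriv f₁.toFun a - 1 with hd
  have hdg : HasDerivAt g d a := HasDerivAt.sub_const (k:ℝ) ((f₁.hasDeriv a).sub (hasDerivAt_id a))
  have hd0 : d ≠ 0 := sub_ne_zero.2 hdne
  have habs : 0 < |d| := abs_pos.2 hd0
  set ε : ℝ := |d|/2 with hε
  have hεpos : 0 < ε := by positivity
  have hslope := hasDerivAt_iff_tendsto_slope.1 hdg
  have hev1 : ∀ᶠ y in 𝓝[≠] a, |slope g a y - d| < ε := by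
    have := Metric.tendsto_nhds.1 hslope ε hεpos
    filter_upwards [this] with y hy
    rwa [Real.dist_eq] at hy
  set δ : ℝ := (|d| + ε + 1)⁻¹ with hδ
  have hδpos : 0 < δ := by positivity
  have hev2 : ∀ᶠ y in 𝓝[≠] a, |y - a| < δ := by
    have hball : ∀ᶠ y in 𝓝 a, |y - a| < δ := by
      filter_upwards [Metric.ball_mem_nhds a hδpos] with y hy
      rwa [Metric.mem_ball, Real.dist_eq] at hy
    exact hball.filter_mono nhdsWithin_le_nhds
  have hmem := hev1.and hev2
  have hmonoP : 𝓝[>] a ≤ 𝓝[≠] a := nhdsWithin_mono a fun y hy => ne_of_gt hy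
  have hmonoM : 𝓝[<] a ≤ 𝓝[≠] a := nhdsWithin_mono a fun y hy => ne_of_lt hy
  have hmemP : ∀ᶠ y in 𝓝[>] a, |slope g a y - d| < ε ∧ |y - a| < δ := hmonoP hmem
  have hmemM : ∀ᶠ y in 𝓝[<] a, |slope g a y - d| < ε ∧ |y - a| < δ := hmonoM hmem
  obtain ⟨xp, ⟨hxp1, hxp2⟩, hxpgt⟩ := (hmemP.and eventually_mem_nhdsWithin).exists
  obtain ⟨xm, ⟨hxm1, hxm2⟩, hxmlt⟩ := (hmemM.and eventually_mem_nhdsWithin).exists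
  rw [Set.mem_Ioi] at hxpgt
  rw [Set.mem_Iio] at hxmlt
  have hgval : ∀ y : ℝ, y ≠ a → g y = slope g a y * (y - a) := by
    intro y hy
    rw [slope_def_field, hga, sub_zero]
    field_simp [sub_ne_zero.2 hy]
  have hbound : ∀ y : ℝ, y ≠ a → |y - a| < δ → |slope g a y - d| < ε → |g y| < 1 := by
    intro y hy hyd hys
    rw [hgval y hy, abs_mul]
    have h1 : |slope g a y| ≤ |d| + ε := by
      have := abs_sub_abs_le_abs_sub (slope g a y) d
      linarith [hys.le]
    have h2 : |slope g a y| * |y - a| ≤ (|d| + ε) * |y - a| :=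
      mul_le_mul_of_nonneg_right h1 (abs_nonneg _)
    have h3 : (|d| + ε) * |y - a| < (|d| + ε) * δ := by
      apply mul_lt_mul_of_pos_left hyd
      positivity
    have h4 : (|d| + ε) * δ < 1 := by
      rw [hδ]
      rw [mul_inv_lt_iff₀ (by positivity)]
      linarith
    linarith
  have hfval : ∀ y : ℝ, f₁.toFun y = y + g y + k := by
    intro y; simp only [hg]; ring
  -- sign analysis
  rcases lt_or_gt_of_ne hd0 with hneg | hpos
  · -- d < 0 : slope near d is negative; g xp < 0, g xm > 0
    have hsp : slope g a xp < 0 := by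
      have := (abs_lt.1 hxp1).2
      have : slope g a xp < d + ε := by linarith
      rw [hε] at this
      rw [abs_of_neg hneg] at this
      linarith
    have hsm : slope g a xm < 0 := by
      have := (abs_lt.1 hxm1).2
      have : slope g a xm < d + ε := by linarith
      rw [hε] at this; rw [abs_of_neg hneg] at this; linarith
    have hgp : g xp < 0 := by
      rw [hgval xp hxpgt.ne']
      exact mul_neg_of_neg_of_pos hsp (by linarith)
    have hgm : g xm > 0 := by
      rw [hgval xm hxmlt.ne]
      exact mul_pos_of_neg_of_neg hsm (by linarith)
    have hbp := hbound xp hxpgt.ne' hxp2 hxp1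
    have hbm := hbound xm hxmlt.ne hxm2 hxm1
    refine ⟨k, xm, xp, g xm, g xp + 1, ⟨hgm, (abs_lt.1 hbm).2⟩,
      ⟨by linarith [(abs_lt.1 hbp).1], by linarith⟩, ?_, ?_⟩
    · rw [hfval xm]
    · rw [hfval xp]; push_cast; ring
  · -- d > 0 : g xp > 0, g xm < 0
    have hsp : slope g a xp > 0 := by
      have := (abs_lt.1 hxp1).1
      rw [hε] at this; rw [abs_of_pos hpos] at this; linarith
    have hsm : slope g a xm > 0 := by
      have := (abs_lt.1 hxm1).1
      rw [hε] at this; rw [abs_of_pos hpos] at this; linarith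
    have hgp : g xp > 0 := by
      rw [hgval xp hxpgt.ne']
      exact mul_pos hsp (by linarith)
    have hgm : g xm < 0 := by
      rw [hgval xm hxmlt.ne]
      exact mul_neg_of_pos_of_neg hsm (by linarith)
    have hbp := hbound xp hxpgt.ne' hxp2 hxp1
    have hbm := hbound xm hxmlt.ne hxm2 hxm1
    refine ⟨k, xp, xm, g xp, g xm + 1, ⟨hgp, (abs_lt.1 hbp).2⟩,
      ⟨by linarith [(abs_lt.1 hbm).1], by linarith⟩, ?_, ?_⟩
    · rw [hfval xp]
    · rw [hfval xm]; push_cast; ring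

end AnalyticCircleDiffeo
namespace AnalyticCircleDiffeo

open Filter Topology Set

noncomputable def clamp (t : ℝ) : ℝ := max 0 (min 1 t)

lemma clamp_cont : Continuous clamp := continuous_const.max (continuous_const.min continuous_id)

lemma clamp_nonneg (t : ℝ) : 0 ≤ clamp t := le_max_left _ _

lemma clamp_le_one (t : ℝ) : clamp t ≤ 1 := max_le zero_le_one (min_le_left _ _)

lemma clamp_zero : clamp 0 = 0 := by norm_num [clamp]

lemma clamp_one : clamp 1 = 1 := by norm_num [clamp]

section interp

variable (H₀ H₁ : AnalyticCircleDiffeo)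

noncomputable def interpF (t : ℝ) : ℝ → ℝ :=
  fun x => (1 - clamp t) * H₀.toFun x + clamp t * H₁.toFun x

lemma interpF_analytic (t x : ℝ) : AnalyticAt ℝ (interpF H₀ H₁ t) x :=
  (analyticAt_const.mul (H₀.analyticAt_toFun x)).add
    (analyticAt_const.mul (H₁.analyticAt_toFun x))

lemma interpF_hasDeriv (t x : ℝ) : HasDerivAt (interpF H₀ H₁ t)
    ((1 - clamp t) * deriv H₀.toFun x + clamp t * deriv H₁.toFun x) x :=
  ((H₀.hasDeriv x).const_mul _).add ((H₁.hasDeriv x).const_mul _)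

lemma interpF_deriv_pos (t x : ℝ) : 0 < deriv (interpF H₀ H₁ t) x := by
  rw [(interpF_hasDeriv H₀ H₁ t x).deriv]
  have h0 := H₀.deriv_pos x
  have h1 := H₁.deriv_pos x
  have hc := clamp_nonneg t
  have hc1 := clamp_le_one t
  rcases eq_or_lt_of_le hc1 with h | h
  · rw [h]; simpa using h1
  · have : 0 < (1 - clamp t) * deriv H₀.toFun x := by
      apply mul_pos (by linarith) h0
    have h2 : 0 ≤ clamp t * deriv H₁.toFun x := mul_nonneg hc h1.le
    linarith

lemma interpF_add_one (t x : ℝ) : interpF H₀ H₁ t (x + 1) = interpF H₀ H₁ t x + 1 := by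
  unfold interpF
  rw [H₀.map_add_one, H₁.map_add_one]
  ring

/-- Linear interpolation between two analytic circle diffeos (with clamped parameter). -/
noncomputable def interp (t : ℝ) : AnalyticCircleDiffeo :=
  mk' (interpF_analytic H₀ H₁ t) (interpF_deriv_pos H₀ H₁ t) (interpF_add_one H₀ H₁ t)

lemma interp_toFun (t : ℝ) : (interp H₀ H₁ t).toFun = interpF H₀ H₁ t := rfl

lemma interp_zero_toFun : (interp H₀ H₁ 0).toFun = H₀.toFun := by
  funext x
  rw [interp_toFun]
  unfold interpF
  rw [clamp_zero]
  ring

lemma interp_one_toFun : (interp H₀ H₁ 1).toFun = H₁.toFun := by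
  funext x
  rw [interp_toFun]
  unfold interpF
  rw [clamp_one]
  ring

lemma interp_joint : Continuous (fun p : ℝ × ℝ => (interp H₀ H₁ p.1).toFun p.2) := by
  show Continuous fun p : ℝ × ℝ =>
    (1 - clamp p.1) * H₀.toFun p.2 + clamp p.1 * H₁.toFun p.2
  exact ((continuous_const.sub (clamp_cont.comp continuous_fst)).mul
    (H₀.cont.comp continuous_snd)).add
    ((clamp_cont.comp continuous_fst).mul (H₁.cont.comp continuous_snd))

lemma interp_inv_joint : Continuous (fun p : ℝ × ℝ => (interp H₀ H₁ p.1).invFun p.2) := by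
  rw [continuous_iff_continuousAt]
  rintro ⟨t₀, y₀⟩
  set x₀ := (interp H₀ H₁ t₀).invFun y₀ with hx₀
  have hJx₀ : (interp H₀ H₁ t₀).toFun x₀ = y₀ := (interp H₀ H₁ t₀).rightInverse y₀
  have hkey : ∀ (p : ℝ × ℝ) (u : ℝ), (interp H₀ H₁ p.1).toFun u < p.2 →
      u < (interp H₀ H₁ p.1).invFun p.2 := by
    intro p u h
    have h2 : (interp H₀ H₁ p.1).toFun ((interp H₀ H₁ p.1).invFun p.2) = p.2 :=
      (interp H₀ H₁ p.1).rightInverse p.2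
    have := (interp H₀ H₁ p.1).strictMono_toFun.lt_iff_lt
      (a := u) (b := (interp H₀ H₁ p.1).invFun p.2)
    rw [h2] at this
    exact this.1 h
  have hkey' : ∀ (p : ℝ × ℝ) (u : ℝ), p.2 < (interp H₀ H₁ p.1).toFun u →
      (interp H₀ H₁ p.1).invFun p.2 < u := by
    intro p u h
    have h2 : (interp H₀ H₁ p.1).toFun ((interp H₀ H₁ p.1).invFun p.2) = p.2 :=
      (interp H₀ H₁ p.1).rightInverse p.2
    have := (interp H₀ H₁ p.1).strictMono_toFun.lt_iff_lt
      (a := (interp H₀ H₁ p.1).invFun p.2) (b := u)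
    rw [h2] at this
    exact this.1 h
  rw [ContinuousAt, tendsto_order]
  constructor
  · intro u hu
    have hlt : (interp H₀ H₁ t₀).toFun u < y₀ := by
      rw [← hJx₀]
      exact (interp H₀ H₁ t₀).strictMono_toFun hu
    have hcont : ContinuousAt (fun p : ℝ × ℝ => (interp H₀ H₁ p.1).toFun u) (t₀, y₀) := by
      have : Continuous (fun p : ℝ × ℝ => (interp H₀ H₁ p.1).toFun u) :=
        (interp_joint H₀ H₁).comp (continuous_fst.prodMk continuous_const)
      exact this.continuousAt
    have hev := hcont.eventually_lt continuousAt_snd hlt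
    filter_upwards [hev] with p hp
    exact hkey p u hp
  · intro u hu
    have hlt : y₀ < (interp H₀ H₁ t₀).toFun u := by
      rw [← hJx₀]
      exact (interp H₀ H₁ t₀).strictMono_toFun hu
    have hcont : ContinuousAt (fun p : ℝ × ℝ => (interp H₀ H₁ p.1).toFun u) (t₀, y₀) := by
      have : Continuous (fun p : ℝ × ℝ => (interp H₀ H₁ p.1).toFun u) :=
        (interp_joint H₀ H₁).comp (continuous_fst.prodMk continuous_const)
      exact this.continuousAt
    have hev := continuousAt_snd.eventually_lt hcont hlt
    filter_upwards [hev] with p hp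
    exact hkey' p u hp

variable (f₁ f₂ : AnalyticCircleDiffeo)

lemma G_joint : Continuous (fun p : ℝ × ℝ => (lift2 f₁ f₂ (interp H₀ H₁ p.1)) p.2) := by
  have h1 : Continuous (fun p : ℝ × ℝ => f₂.invFun p.2) := f₂.contInv.comp continuous_snd
  have h2 : Continuous (fun p : ℝ × ℝ => (interp H₀ H₁ p.1).invFun (f₂.invFun p.2)) :=
    (interp_inv_joint H₀ H₁).comp (continuous_fst.prodMk h1)
  have h3 : Continuous (fun p : ℝ × ℝ => f₁.toFun ((interp H₀ H₁ p.1).invFun (f₂.invFun p.2))) :=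
    f₁.cont.comp h2
  exact (interp_joint H₀ H₁).comp (continuous_fst.prodMk h3)

lemma phi_cont :
    Continuous (fun t => (lift2 f₁ f₂ (interp H₀ H₁ t)).translationNumber) := by
  set φ := fun t => (lift2 f₁ f₂ (interp H₀ H₁ t)).translationNumber with hφ
  set c : ℕ → ℝ → ℝ := fun n t => (⇑(lift2 f₁ f₂ (interp H₀ H₁ t)))^[n] 0 with hc
  have hcc : ∀ n, Continuous (fun t => c n t) := by
    intro n
    induction n with
    | zero => simpa [hc] using continuous_const
    | succ m ih =>
      have he : (fun t => c (m+1) t) =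
          fun t => (lift2 f₁ f₂ (interp H₀ H₁ t)) (c m t) := by
        funext t
        exact Function.iterate_succ_apply' _ _ _
      rw [he]
      exact (G_joint H₀ H₁ f₁ f₂).comp (continuous_id.prodMk ih)
  have hu : TendstoUniformly (fun (n : ℕ) (t : ℝ) => c n t / n) φ atTop := by
    rw [Metric.tendstoUniformly_iff]
    intro ε hε
    obtain ⟨N, hN⟩ := exists_nat_gt (1/ε)
    filter_upwards [eventually_ge_atTop (N+1)] with n hn t
    have hNn : (N:ℝ) + 1 ≤ (n:ℝ) := by exact_mod_cast hn
    have hn0 : 0 < (n:ℝ) := by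
      have : (0:ℝ) ≤ N := Nat.cast_nonneg N
      linarith
    have hb := (lift2 f₁ f₂ (interp H₀ H₁ t)).dist_pow_map_zero_mul_translationNumber_le n
    rw [CircleDeg1Lift.coe_pow] at hb
    have hb2 : |c n t - (n:ℝ) * φ t| ≤ 1 := by
      rw [Real.dist_eq] at hb
      exact hb
    rw [Real.dist_eq]
    have he : φ t - c n t / n = -((c n t - (n:ℝ) * φ t) / n) := by
      field_simp
      ring
    rw [he, abs_neg, abs_div, abs_of_pos hn0]
    rw [div_lt_iff₀ hn0]
    have h1ε : 1/ε < (n:ℝ) := by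
      have : (0:ℝ) ≤ N := Nat.cast_nonneg N
      linarith
    calc |c n t - (n:ℝ) * φ t| ≤ 1 := hb2
      _ < ε * n := by
        have h2 : 1 < (n:ℝ) * ε := (div_lt_iff₀ hε).1 h1ε
        have h3 : (n:ℝ) * ε = ε * n := mul_comm _ _
        linarith
  exact hu.continuous (Filter.Eventually.of_forall fun n => (hcc n).div_const _).frequently

end interp

end AnalyticCircleDiffeo
open AnalyticCircleDiffeo in
/-- For a hyperbolic analytic circle diffeomorphism `f₁` with
`rot f₁ = 0 (mod 1)` and an analytic circle diffeomorphism `f₂ ≠ id`, every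
`ρ ∈ [0, 1/2]` is attained `(mod 1)` as `rot ((h ∘ f₁ ∘ h⁻¹) ∘ f₂⁻¹)` for some analytic
circle diffeomorphism `h`. -/
theorem statement6 (f₁ f₂ : AnalyticCircleDiffeo)
    (h₁hyp : Hyperbolic f₁) (h₁rot : ∃ k : ℤ, rot f₁ = (k : ℝ))
    (h₂ : ¬ IsId f₂) :
    ∀ ρ ∈ Set.Icc (0 : ℝ) (1 / 2),
      ∃ h : AnalyticCircleDiffeo, ∃ k : ℤ,
        rot (((h.comp f₁).comp h.symm).comp f₂.symm) = ρ + (k : ℝ) := by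
  intro ρ hρ
  obtain ⟨j, v₁, v₂, β₁, β₂, hβ₁, hβ₂, hv₁, hv₂⟩ := exists_updown f₁ h₁hyp
  obtain ⟨w, hw⟩ := exists_nonint f₂ h₂
  set c : ℝ := f₂.toFun w - w with hcdef
  have hF2 : f₂.toFun w = w + c := by rw [hcdef]; ring
  have hγ : Int.fract c ∈ Set.Ioo (0:ℝ) 1 := by
    constructor
    · rcases (Int.fract_nonneg c).lt_or_eq with h | h
      · exact h
      · exfalso
        have hzero : c - ⌊c⌋ = 0 := h.symm
        exact hw ⌊c⌋ (by rw [hcdef] at hzero ⊢; linarith)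
    · exact Int.fract_lt_one c
  obtain ⟨Hup, hup1, hup2⟩ := exists_two_point v₁ w hβ₁ hγ
  obtain ⟨Hdn, hdn1, hdn2⟩ := exists_two_point v₂ w hβ₂ hγ
  have hτup : (lift2 f₁ f₂ Hup).translationNumber = ((j - ⌊c⌋ : ℤ):ℝ) :=
    tau_int f₁ f₂ Hup hv₁ hF2 hup1 hup2
  have hτdn : (lift2 f₁ f₂ Hdn).translationNumber = ((j - 1 - ⌊c⌋ : ℤ):ℝ) :=
    tau_int f₁ f₂ Hdn hv₂ hF2 hdn1 hdn2
  set m : ℤ := j - 1 - ⌊c⌋ with hm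
  set φ : ℝ → ℝ := fun t => (lift2 f₁ f₂ (interp Hdn Hup t)).translationNumber with hφdef
  have hφc : Continuous φ := phi_cont Hdn Hup f₁ f₂
  have hφ0 : φ 0 = (m:ℝ) := by
    show (lift2 f₁ f₂ (interp Hdn Hup 0)).translationNumber = (m:ℝ)
    rw [lift2_congr f₁ f₂ _ Hdn (interp_zero_toFun Hdn Hup), hτdn]
  have hφ1 : φ 1 = (m:ℝ) + 1 := by
    show (lift2 f₁ f₂ (interp Hdn Hup 1)).translationNumber = (m:ℝ) + 1
    rw [lift2_congr f₁ f₂ _ Hup (interp_one_toFun Hdn Hup), hτup, hm]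
    push_cast
    ring
  have hmem : ρ + (m:ℝ) ∈ Set.Icc (φ 0) (φ 1) := by
    rw [hφ0, hφ1]
    exact ⟨by linarith [hρ.1], by linarith [hρ.2]⟩
  obtain ⟨t, _, ht⟩ := intermediate_value_Icc (by norm_num : (0:ℝ) ≤ 1)
    hφc.continuousOn hmem
  refine ⟨interp Hdn Hup t, m, ?_⟩
  have h1 := rot_eq_tau ((((interp Hdn Hup t).comp f₁).comp (interp Hdn Hup t).symm).comp f₂.symm)
  have h2 : liftOf ((((interp Hdn Hup t).comp f₁).comp (interp Hdn Hup t).symm).comp f₂.symm)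
      = lift2 f₁ f₂ (interp Hdn Hup t) := by
    ext x
    rfl
  rw [h1, h2]
  exact ht
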